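/- arXiv:2209.11059 — 4 statements merged into one kernel-verified Lean document; each statement's English description precedes it below -/
import Mathlib

section
/- For a ∈ [½·log 2, ∞), define R(a) = log((cosh a + 1)/(cosh a − 1)) and A(a) = log(cosh a) − log(cosh a − 1). Then 0 < A(a) < R(a), the ratio A(a)/R(a) is monotone decreasing in a, and R(a) ∈ (0, log(17 + 12√2)]. -/
open Real Set

noncomputable def Rfun (a : ℝ) : ℝ := Real.log ((Real.cosh a + 1) / (Real.cosh a - 1))

noncomputable def Afun (a : ℝ) : ℝ := Real.log (Real.cosh a) - Real.log (Real.cosh a - 1)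

lemma key_ineq {c : ℝ} (hc : 1 < c) :
    2 * c * (Real.log c - Real.log (c - 1)) ≤ (c + 1) * (Real.log (c + 1) - Real.log (c - 1)) := by
  have h := Real.convexOn_mul_log.2 (show (c - 1 : ℝ) ∈ Ici (0:ℝ) by simp; linarith)
    (show (c + 1 : ℝ) ∈ Ici (0:ℝ) by simp; linarith)
    (by norm_num : (0:ℝ) ≤ (1/2:ℝ)) (by norm_num : (0:ℝ) ≤ (1/2:ℝ)) (by norm_num)
  simp only [smul_eq_mul] at h
  rw [show (1/2 : ℝ) * (c - 1) + (1/2) * (c + 1) = c by ring] at h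
  nlinarith [h]

lemma cosh_half_log_two : Real.cosh (Real.log 2 / 2) = 3 * Real.sqrt 2 / 4 := by
  have h2 : Real.exp (Real.log 2 / 2) = Real.sqrt 2 := by
    rw [← Real.log_sqrt (by norm_num), Real.exp_log (Real.sqrt_pos.mpr (by norm_num))]
  have hs : (0:ℝ) < Real.sqrt 2 := Real.sqrt_pos.mpr (by norm_num)
  rw [Real.cosh_eq, Real.exp_neg, h2]
  rw [div_eq_div_iff (by norm_num) (by norm_num)]
  field_simp
  nlinarith [Real.sq_sqrt (show (0:ℝ) ≤ 2 by norm_num)]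

lemma cosh_lb {a : ℝ} (ha : Real.log 2 / 2 ≤ a) : 3 * Real.sqrt 2 / 4 ≤ Real.cosh a := by
  have h0 : 0 < Real.log 2 / 2 := by positivity
  rw [← cosh_half_log_two]
  rw [Real.cosh_le_cosh, abs_of_nonneg h0.le, abs_of_nonneg (h0.le.trans ha)]
  exact ha

lemma one_lt_cosh' {a : ℝ} (ha : Real.log 2 / 2 ≤ a) : 1 < Real.cosh a := by
  have := cosh_lb ha
  nlinarith [Real.sq_sqrt (show (0:ℝ) ≤ 2 by norm_num), Real.sqrt_nonneg 2]

lemma a_pos {a : ℝ} (ha : Real.log 2 / 2 ≤ a) : 0 < a :=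
  lt_of_lt_of_le (by positivity) ha

theorem stmt_12 :
    (∀ a : ℝ, Real.log 2 / 2 ≤ a → 0 < Afun a ∧ Afun a < Rfun a) ∧
    AntitoneOn (fun a => Afun a / Rfun a) (Set.Ici (Real.log 2 / 2)) ∧
    (∀ a : ℝ, Real.log 2 / 2 ≤ a →
      Rfun a ∈ Set.Ioc (0 : ℝ) (Real.log (17 + 12 * Real.sqrt 2))) := by
  -- basic facts
  have hRsplit : ∀ a : ℝ, Real.log 2 / 2 ≤ a →
      Rfun a = Real.log (Real.cosh a + 1) - Real.log (Real.cosh a - 1) := by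
    intro a ha
    have hc := one_lt_cosh' ha
    unfold Rfun
    rw [Real.log_div (by linarith) (by linarith)]
  -- the nice version of the quotient
  set g : ℝ → ℝ := fun a => (Real.log (Real.cosh a) - Real.log (Real.cosh a - 1)) /
      (Real.log (Real.cosh a + 1) - Real.log (Real.cosh a - 1)) with hg
  -- derivative of g at points with cosh a > 1
  have hderiv : ∀ a : ℝ, 1 < Real.cosh a →
      HasDerivAt g
        (((Real.sinh a / Real.cosh a - Real.sinh a / (Real.cosh a - 1)) *
            (Real.log (Real.cosh a + 1) - Real.log (Real.cosh a - 1)) -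
          (Real.log (Real.cosh a) - Real.log (Real.cosh a - 1)) *
            (Real.sinh a / (Real.cosh a + 1) - Real.sinh a / (Real.cosh a - 1))) /
          (Real.log (Real.cosh a + 1) - Real.log (Real.cosh a - 1)) ^ 2) a := by
    intro a hc
    have hcc : HasDerivAt Real.cosh (Real.sinh a) a := Real.hasDerivAt_cosh a
    have h1 : HasDerivAt (fun a => Real.log (Real.cosh a)) (Real.sinh a / Real.cosh a) a :=
      hcc.log (by linarith)
    have h3 : HasDerivAt (fun a => Real.log (Real.cosh a - 1))
        (Real.sinh a / (Real.cosh a - 1)) a := (hcc.sub_const 1).log (by linarith)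
    have h5 : HasDerivAt (fun a => Real.log (Real.cosh a + 1))
        (Real.sinh a / (Real.cosh a + 1)) a := (hcc.add_const 1).log (by linarith)
    have hv0 : Real.log (Real.cosh a + 1) - Real.log (Real.cosh a - 1) ≠ 0 := by
      have := Real.log_lt_log (show (0:ℝ) < Real.cosh a - 1 by linarith)
        (show Real.cosh a - 1 < Real.cosh a + 1 by linarith)
      linarith
    exact (h1.sub h3).div (h5.sub h3) hv0
  have hanti : AntitoneOn g (Set.Ici (Real.log 2 / 2)) := by
    apply antitoneOn_of_deriv_nonpos (convex_Ici _)
    · intro x hx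
      exact ((hderiv x (one_lt_cosh' hx)).differentiableAt).continuousAt.continuousWithinAt
    · rw [interior_Ici]
      intro x hx
      exact ((hderiv x (one_lt_cosh' (le_of_lt hx))).differentiableAt).differentiableWithinAt
    · rw [interior_Ici]
      intro x hx
      rw [(hderiv x (one_lt_cosh' (le_of_lt hx))).deriv]
      set c := Real.cosh x with hcdef
      set s := Real.sinh x with hsdef
      have hc : 1 < c := one_lt_cosh' (le_of_lt hx)
      have hs : 0 < s := Real.sinh_pos_iff.mpr (a_pos (le_of_lt hx))
      set u := Real.log c - Real.log (c - 1) with hu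
      set v := Real.log (c + 1) - Real.log (c - 1) with hv
      have hvpos : 0 < v := by
        have := Real.log_lt_log (show (0:ℝ) < c - 1 by linarith)
          (show c - 1 < c + 1 by linarith)
        simp [hv]; linarith
      have hupos : 0 < u := by
        have := Real.log_lt_log (show (0:ℝ) < c - 1 by linarith)
          (show c - 1 < c by linarith)
        simp [hu]; linarith
      apply div_nonpos_iff.mpr
      right
      refine ⟨?_, sq_nonneg v⟩
      have hkey := key_ineq hc
      have h0 : c ≠ 0 := by linarith
      have h0m : c - 1 ≠ 0 := by linarith
      have h0p : c + 1 ≠ 0 := by linarith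
      have hpos : (0:ℝ) < s / (c * (c - 1) * (c + 1)) :=
        div_pos hs (mul_pos (mul_pos (by linarith : (0:ℝ) < c) (by linarith : (0:ℝ) < c - 1)) (by linarith : (0:ℝ) < c + 1))
      have h := mul_le_mul_of_nonneg_right hkey hpos.le
      have e1 : 2 * c * u * (s / (c * (c - 1) * (c + 1))) = u * (2 * s / ((c + 1) * (c - 1))) := by
        field_simp
      have e2 : (c + 1) * v * (s / (c * (c - 1) * (c + 1))) = s / (c * (c - 1)) * v := by
        field_simp
      rw [e1, e2] at h
      have e3 : s / c - s / (c - 1) = -(s / (c * (c - 1))) := by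
        field_simp
        ring
      have e4 : s / (c + 1) - s / (c - 1) = -(2 * s / ((c + 1) * (c - 1))) := by
        field_simp
        ring
      rw [e3, e4]
      nlinarith [h]
  refine ⟨?_, ?_, ?_⟩
  · intro a ha
    have hc := one_lt_cosh' ha
    constructor
    · have := Real.log_lt_log (show (0:ℝ) < Real.cosh a - 1 by linarith)
        (show Real.cosh a - 1 < Real.cosh a by linarith)
      unfold Afun; linarith
    · rw [hRsplit a ha]
      have := Real.log_lt_log (show (0:ℝ) < Real.cosh a by linarith)
        (show Real.cosh a < Real.cosh a + 1 by linarith)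
      unfold Afun; linarith
  · intro x hx y hy hxy
    have h := hanti hx hy hxy
    simp only [hg] at h
    simpa only [Afun, hRsplit x hx, hRsplit y hy] using h
  · intro a ha
    have hc := one_lt_cosh' ha
    have hclb := cosh_lb ha
    constructor
    · unfold Rfun
      apply Real.log_pos
      rw [lt_div_iff₀ (by linarith)]
      linarith
    · unfold Rfun
      apply Real.log_le_log (div_pos (by linarith) (by linarith))
      rw [div_le_iff₀ (by linarith)]
      nlinarith [Real.sq_sqrt (show (0:ℝ) ≤ 2 by norm_num), Real.sqrt_nonneg 2]
end

section
/- Let λ > 0 and c > 0 be real numbers. For any y > 0, 0 ≤ (1/2πi)∫_{c−i∞}^{c+i∞} y^s · (e^{λs}−1)/(λs) · ds/s − 1_{[1,∞)}(y) ≤ (1/2πi)∫_{c−i∞}^{c+i∞} y^s · (e^{λs}−1)/(λs) · (1−e^{−λs})/s · ds, where 1_{[1,∞)}(y) is 1 if y ≥ 1 and 0 otherwise. -/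
open MeasureTheory Set Filter intervalIntegral
open scoped Real FourierTransform

noncomputable def gfun (lam x : ℝ) : ℝ := min 1 (max 0 ((x + lam) / lam))

lemma gfun_nonneg (lam x : ℝ) : 0 ≤ gfun lam x :=
  le_min zero_le_one (le_max_left 0 _)

lemma gfun_le_one (lam x : ℝ) : gfun lam x ≤ 1 := min_le_left _ _

lemma gfun_of_nonneg {lam x : ℝ} (hlam : 0 < lam) (hx : 0 ≤ x) : gfun lam x = 1 := by
  have : (1:ℝ) ≤ (x + lam) / lam := (le_div_iff₀ hlam).2 (by linarith)
  simp [gfun, max_eq_right, this, min_eq_left, le_trans zero_le_one this]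

lemma gfun_of_le {lam x : ℝ} (hlam : 0 < lam) (hx : x ≤ -lam) : gfun lam x = 0 := by
  have : (x + lam) / lam ≤ 0 := div_nonpos_of_nonpos_of_nonneg (by linarith) hlam.le
  simp [gfun, max_eq_left this, min_eq_right zero_le_one]

lemma gfun_of_mem {lam x : ℝ} (hlam : 0 < lam) (h1 : -lam ≤ x) (h2 : x ≤ 0) :
    gfun lam x = (x + lam) / lam := by
  have h0 : 0 ≤ (x + lam) / lam := div_nonneg (by linarith) hlam.le
  have h1' : (x + lam) / lam ≤ 1 := (div_le_one hlam).2 (by linarith)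
  simp [gfun, max_eq_right h0, min_eq_right h1']

lemma continuous_gfun (lam : ℝ) : Continuous (gfun lam) := by
  unfold gfun; fun_prop

lemma hasDerivAt_cexp_neg_mul (s : ℂ) (u : ℝ) :
    HasDerivAt (fun v : ℝ => Complex.exp (-(s * v))) (-s * Complex.exp (-(s * u))) u := by
  have h : HasDerivAt (fun w : ℂ => Complex.exp (-(s * w)))
      (Complex.exp (-(s * u)) * (-s)) (u : ℂ) := by
    have h1 : HasDerivAt (fun w : ℂ => -(s * w)) (-s) (u : ℂ) := by
      simpa using (hasDerivAt_neg (u : ℂ)).const_mul s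
    exact h1.cexp
  simpa [mul_comm] using h.comp_ofReal

lemma integrableOn_cexp_neg_mul {s : ℂ} (hs : 0 < s.re) (a : ℝ) :
    IntegrableOn (fun u : ℝ => Complex.exp (-(s * u))) (Ioi a) := by
  apply Integrable.mono' (g := fun u : ℝ => Real.exp (-(s.re * u)))
  · exact (by simpa using exp_neg_integrableOn_Ioi a hs :
      IntegrableOn (fun u : ℝ => Real.exp (-(s.re * u))) (Ioi a))
  · exact (Complex.continuous_exp.comp (by fun_prop)).aestronglyMeasurable.restrict
  · filter_upwards with u
    rw [Complex.norm_exp]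
    simp

lemma integral_cexp_Ioi {s : ℂ} (hs : 0 < s.re) :
    ∫ u in Ioi (0:ℝ), Complex.exp (-(s * u)) = 1 / s := by
  have hs0 : s ≠ 0 := fun h => by simp [h] at hs
  have key := integral_Ioi_of_hasDerivAt_of_tendsto
    (f := fun u : ℝ => -Complex.exp (-(s * u)) / s)
    (f' := fun u : ℝ => Complex.exp (-(s * u))) (a := 0) (m := 0)
    (by
      apply Continuous.continuousWithinAt
      exact ((Complex.continuous_exp.comp (by fun_prop)).neg).div_const s)
    (fun x hx => by
      have := ((hasDerivAt_cexp_neg_mul s x).neg).div_const s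
      refine this.congr_deriv ?_
      rw [neg_mul, neg_neg, mul_div_cancel_left₀ _ hs0])
    (integrableOn_cexp_neg_mul hs 0)
    ?_
  · rw [key]; field_simp; simp
  · rw [tendsto_zero_iff_norm_tendsto_zero]
    have : (fun u : ℝ => ‖-Complex.exp (-(s * u)) / s‖)
        = fun u : ℝ => Real.exp (-(s.re * u)) / ‖s‖ := by
      ext u
      rw [norm_div, norm_neg, Complex.norm_exp]
      simp
    rw [this]
    have h1 : Tendsto (fun u : ℝ => Real.exp (-(s.re * u))) atTop (nhds 0) := by
      apply Real.tendsto_exp_atBot.comp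
      exact tendsto_neg_atBot_iff.2 ((tendsto_const_mul_atTop_of_pos hs).2 tendsto_id)
    simpa using h1.div_const ‖s‖

lemma integral_interval_part {lam : ℝ} (hlam : 0 < lam) {s : ℂ} (hs0 : s ≠ 0) :
    ∫ u in (-lam)..(0:ℝ), (((u:ℂ) + lam) / lam) * Complex.exp (-(s * u))
      = -1 / s + (Complex.exp (lam * s) - 1) / (lam * s ^ 2) := by
  have hl0 : (lam : ℂ) ≠ 0 := by exact_mod_cast hlam.ne'
  have hderiv : ∀ u ∈ uIcc (-lam) (0:ℝ),
      HasDerivAt (fun u : ℝ => -(((u:ℂ) + lam) * Complex.exp (-(s * u))) / (lam * s)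
          - Complex.exp (-(s * u)) / (lam * s ^ 2))
        ((((u:ℂ) + lam) / lam) * Complex.exp (-(s * u))) u := by
    intro u _
    have h1 : HasDerivAt (fun u : ℝ => ((u:ℂ) + lam)) 1 u := by
      simpa using (Complex.ofRealCLM.hasDerivAt (x := u)).add_const (lam : ℂ)
    have h2 := hasDerivAt_cexp_neg_mul s u
    have h3 := (((h1.mul h2).neg).div_const ((lam : ℂ) * s)).sub (h2.div_const ((lam:ℂ) * s ^ 2))
    refine h3.congr_deriv ?_
    field_simp
    ring
  have hint : IntervalIntegrable
      (fun u : ℝ => (((u:ℂ) + lam) / lam) * Complex.exp (-(s * u))) volume (-lam) 0 := by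
    apply Continuous.intervalIntegrable
    exact (by fun_prop : Continuous fun u : ℝ => (((u:ℂ) + lam) / lam)).mul
      (Complex.continuous_exp.comp (by fun_prop))
  rw [intervalIntegral.integral_eq_sub_of_hasDerivAt hderiv hint]
  have e1 : Complex.exp (-(s * ((0:ℝ):ℂ))) = 1 := by simp
  have e2 : Complex.exp (-(s * ((-lam:ℝ):ℂ))) = Complex.exp (lam * s) := by
    push_cast; ring_nf
  simp only [e1, e2]
  push_cast
  generalize Complex.exp ((lam:ℂ) * s) = E
  have hs2 : (lam:ℂ) * s ^ 2 ≠ 0 := by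
    simp [hl0, hs0]
  rw [div_sub_div _ _ (mul_ne_zero hl0 hs0) hs2, div_sub_div _ _ (mul_ne_zero hl0 hs0) hs2,
    div_add_div _ _ hs0 hs2, div_sub_div _ _ (mul_ne_zero (mul_ne_zero hl0 hs0) hs2)
      (mul_ne_zero (mul_ne_zero hl0 hs0) hs2),
    div_eq_div_iff (by simp [hl0, hs0]) (by simp [hl0, hs0])]
  ring

lemma integrable_gmul {lam : ℝ} (hlam : 0 < lam) {s : ℂ} (hs : 0 < s.re) :
    Integrable (fun u : ℝ => (gfun lam u : ℂ) * Complex.exp (-(s * u))) := by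
  have hmaj : Integrable ((Ici (-lam)).indicator fun u : ℝ => Real.exp (-(s.re * u))) := by
    refine (IntegrableOn.integrable_indicator ?_ measurableSet_Ici)
    rw [integrableOn_Ici_iff_integrableOn_Ioi]
    simpa using exp_neg_integrableOn_Ioi (-lam) hs
  refine Integrable.mono' hmaj ?_ ?_
  · exact ((Complex.continuous_ofReal.comp (continuous_gfun lam)).mul
      (Complex.continuous_exp.comp (by fun_prop))).aestronglyMeasurable
  · filter_upwards with u
    rcases le_or_gt (-lam) u with h | h
    · rw [Set.indicator_of_mem (mem_Ici.2 h)]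
      rw [norm_mul, Complex.norm_exp,
        Complex.norm_real, Real.norm_eq_abs, abs_of_nonneg (gfun_nonneg lam u)]
      calc gfun lam u * Real.exp ((-(s * u)).re) ≤ 1 * Real.exp ((-(s * u)).re) := by
            gcongr; exact gfun_le_one lam u
        _ = Real.exp (-(s.re * u)) := by simp
    · rw [Set.indicator_of_notMem (by simpa using h)]
      rw [gfun_of_le hlam h.le]
      simp

lemma key_laplace {lam : ℝ} (hlam : 0 < lam) {s : ℂ} (hs : 0 < s.re) :
    ∫ u : ℝ, (gfun lam u : ℂ) * Complex.exp (-(s * u))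
      = (Complex.exp (lam * s) - 1) / (lam * s ^ 2) := by
  have hs0 : s ≠ 0 := fun h => by simp [h] at hs
  have hint := integrable_gmul hlam hs
  have hsplit := integral_Iic_add_Ioi (b := (0:ℝ)) hint.integrableOn hint.integrableOn
  have hIoi : ∫ u in Ioi (0:ℝ), (gfun lam u : ℂ) * Complex.exp (-(s * u)) = 1 / s := by
    have e : ∫ u in Ioi (0:ℝ), (gfun lam u : ℂ) * Complex.exp (-(s * u))
        = ∫ u in Ioi (0:ℝ), Complex.exp (-(s * u)) :=
      setIntegral_congr_fun measurableSet_Ioi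
        (fun u hu => by rw [gfun_of_nonneg hlam (le_of_lt hu)]; norm_num)
    rw [e]
    exact integral_cexp_Ioi hs
  have hIic : ∫ u in Iic (0:ℝ), (gfun lam u : ℂ) * Complex.exp (-(s * u))
      = -1 / s + (Complex.exp (lam * s) - 1) / (lam * s ^ 2) := by
    have e2 : ∫ u in Ioc (-lam) (0:ℝ), (gfun lam u : ℂ) * Complex.exp (-(s * u))
        = ∫ u in Ioc (-lam) (0:ℝ), (((u:ℂ) + lam) / lam) * Complex.exp (-(s * u)) :=
      setIntegral_congr_fun measurableSet_Ioc
        (fun u hu => by rw [gfun_of_mem hlam hu.1.le hu.2]; push_cast; ring)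
    rw [← Set.Iic_union_Ioc_eq_Iic (show -lam ≤ (0:ℝ) by linarith),
      setIntegral_union (Set.Iic_disjoint_Ioc le_rfl) measurableSet_Ioc
        hint.integrableOn hint.integrableOn,
      setIntegral_eq_zero_of_forall_eq_zero
        (fun u (hu : u ∈ Iic (-lam)) => by rw [gfun_of_le hlam hu]; norm_num),
      e2, ← intervalIntegral.integral_of_le (show -lam ≤ (0:ℝ) by linarith),
      integral_interval_part hlam hs0]
    ring
  rw [← hsplit, hIic, hIoi]
  ring

noncomputable def Gf (lam c : ℝ) : ℝ → ℂ :=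
  fun u => (gfun lam u : ℂ) * Complex.exp (-((c:ℂ) * u))

lemma continuous_Gf (lam c : ℝ) : Continuous (Gf lam c) :=
  (Complex.continuous_ofReal.comp (continuous_gfun lam)).mul
    (Complex.continuous_exp.comp (by fun_prop))

lemma integrable_Gf {lam c : ℝ} (hlam : 0 < lam) (hc : 0 < c) : Integrable (Gf lam c) :=
  integrable_gmul hlam (s := (c:ℂ)) (by simpa using hc)

lemma fourier_Gf {lam c : ℝ} (hlam : 0 < lam) (hc : 0 < c) (w : ℝ) :
    𝓕 (Gf lam c) w = (Complex.exp (lam * ((c:ℂ) + (2*π*w : ℝ) * Complex.I)) - 1)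
      / (lam * ((c:ℂ) + (2*π*w : ℝ) * Complex.I) ^ 2) := by
  rw [Real.fourier_real_eq_integral_exp_smul]
  have h : ∀ v : ℝ, Complex.exp (↑(-2 * π * v * w) * Complex.I) • Gf lam c v
      = (gfun lam v : ℂ) * Complex.exp (-(((c:ℂ) + (2*π*w : ℝ) * Complex.I) * v)) := by
    intro v
    rw [smul_eq_mul, Gf, mul_comm, mul_assoc, ← Complex.exp_add]
    congr 2
    push_cast
    ring
  simp_rw [h]
  exact key_laplace hlam (s := (c:ℂ) + (2*π*w : ℝ) * Complex.I) (by simpa using hc)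

lemma integrable_fourier_Gf {lam c : ℝ} (hlam : 0 < lam) (hc : 0 < c) :
    Integrable (𝓕 (Gf lam c)) := by
  have hfun : 𝓕 (Gf lam c) = fun w : ℝ =>
      (Complex.exp (lam * ((c:ℂ) + (2*π*w : ℝ) * Complex.I)) - 1)
      / (lam * ((c:ℂ) + (2*π*w : ℝ) * Complex.I) ^ 2) := funext (fourier_Gf hlam hc)
  rw [hfun]
  set m : ℝ := min (c^2) 1 with hm
  have hm0 : 0 < m := lt_min (by positivity) one_pos
  have hsne : ∀ w : ℝ, ((c:ℂ) + (2*π*w : ℝ) * Complex.I) ≠ 0 := by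
    intro w h
    have : ((c:ℂ) + (2*π*w : ℝ) * Complex.I).re = 0 := by rw [h]; simp
    simp at this
    linarith
  refine Integrable.mono'
    (g := fun w : ℝ => ((Real.exp (lam*c) + 1) / (lam * m)) * (1 + w^2)⁻¹)
    (integrable_inv_one_add_sq.const_mul _) ?_ ?_
  · apply Continuous.aestronglyMeasurable
    apply Continuous.div (by fun_prop)
    · fun_prop
    · intro w
      exact mul_ne_zero (by exact_mod_cast hlam.ne') (pow_ne_zero 2 (hsne w))
  · filter_upwards with w
    have hnorm : ‖(lam : ℂ) * ((c:ℂ) + (2*π*w : ℝ) * Complex.I) ^ 2‖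
        = lam * (c^2 + (2*π*w)^2) := by
      rw [norm_mul, norm_pow, Complex.sq_norm, Complex.normSq_add_mul_I]
      simp [Complex.norm_real, abs_of_pos hlam]
    rw [norm_div, hnorm]
    have h1 : ‖Complex.exp ((lam:ℂ) * ((c:ℂ) + (2*π*w : ℝ) * Complex.I)) - 1‖
        ≤ Real.exp (lam * c) + 1 := by
      refine (norm_sub_le _ _).trans ?_
      rw [Complex.norm_exp]
      gcongr
      · simp
      · simp
    have h2 : m * (1 + w^2) ≤ c^2 + (2*π*w)^2 := by
      have hπ : (1:ℝ) ≤ 4 * π^2 := by nlinarith [Real.pi_gt_three]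
      have : m * w^2 ≤ (2*π*w)^2 := by nlinarith [min_le_right (c^2) 1, sq_nonneg w]
      nlinarith [min_le_left (c^2) 1]
    calc ‖Complex.exp ((lam:ℂ) * ((c:ℂ) + (2*π*w : ℝ) * Complex.I)) - 1‖ / (lam * (c^2 + (2*π*w)^2))
        ≤ (Real.exp (lam*c) + 1) / (lam * (m * (1 + w^2))) := by
          apply div_le_div₀ (by positivity) h1 (by positivity) (by nlinarith)
      _ = ((Real.exp (lam*c) + 1) / (lam * m)) * (1 + w^2)⁻¹ := by
          rw [show lam * (m*(1+w^2)) = (lam*m)*(1+w^2) by ring, ← div_div, div_eq_mul_inv]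

lemma master {lam c : ℝ} (hlam : 0 < lam) (hc : 0 < c) (x : ℝ) :
    ∫ t : ℝ, Complex.exp (((c:ℂ) + t * Complex.I) * x)
        * ((Complex.exp ((lam:ℂ) * ((c:ℂ) + t * Complex.I)) - 1)
          / ((lam:ℂ) * ((c:ℂ) + t * Complex.I) ^ 2))
      = (2 * π) * (gfun lam x : ℂ) := by
  set Φ : ℝ → ℂ := fun t => Complex.exp (((c:ℂ) + t * Complex.I) * x)
      * ((Complex.exp ((lam:ℂ) * ((c:ℂ) + t * Complex.I)) - 1)
        / ((lam:ℂ) * ((c:ℂ) + t * Complex.I) ^ 2)) with hΦ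
  have h1 : ∀ w : ℝ, Φ (2 * π * w)
      = Complex.exp ((c:ℂ) * x)
        * (Complex.exp (↑(-2 * π * w * (-x)) * Complex.I) • 𝓕 (Gf lam c) w) := by
    intro w
    rw [smul_eq_mul, fourier_Gf hlam hc, hΦ]
    simp only []
    rw [← mul_assoc, ← Complex.exp_add]
    congr 2
    push_cast
    ring
  have h2 : ∫ w : ℝ, Φ (2 * π * w) = |(2 * π)⁻¹| • ∫ t, Φ t :=
    MeasureTheory.Measure.integral_comp_mul_left Φ (2 * π)
  have h3 : ∫ w : ℝ, Φ (2 * π * w) = Complex.exp ((c:ℂ) * x) * Gf lam c x := by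
    rw [funext h1, MeasureTheory.integral_const_mul]
    congr 1
    have hinv := (integrable_Gf hlam hc).fourierInv_fourier_eq (integrable_fourier_Gf hlam hc)
      ((continuous_Gf lam c).continuousAt (x := x))
    rw [Real.fourierInv_eq_fourier_neg,
      Real.fourier_real_eq_integral_exp_smul] at hinv
    exact hinv
  have h4 : Complex.exp ((c:ℂ) * x) * Gf lam c x = (gfun lam x : ℂ) := by
    rw [Gf, mul_comm ((gfun lam x : ℂ)) _, ← mul_assoc, ← Complex.exp_add]
    simp
  rw [h3, h4] at h2
  have hπ : |(2 * π)⁻¹| = (2 * π)⁻¹ := abs_of_pos (by positivity)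
  rw [hπ, Complex.real_smul] at h2
  have h2π : (((2 * π : ℝ)) : ℂ) ≠ 0 := by
    simp [Real.pi_ne_zero]
  push_cast at h2
  have h2π' : ((2:ℂ) * π) ≠ 0 := by simp [Real.pi_ne_zero]
  have hfin := (inv_mul_eq_iff_eq_mul₀ h2π').1 h2.symm
  rw [hfin]

lemma sne {c : ℝ} (hc : 0 < c) (t : ℝ) : ((c:ℂ) + t * Complex.I) ≠ 0 := by
  intro h
  have := congrArg Complex.re h
  simp at this
  linarith

lemma integrable_Fc {lam c : ℝ} (hlam : 0 < lam) (hc : 0 < c) (x : ℝ) :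
    Integrable (fun t : ℝ => Complex.exp (((c:ℂ) + t * Complex.I) * x)
      * ((Complex.exp ((lam:ℂ) * ((c:ℂ) + t * Complex.I)) - 1)
        / ((lam:ℂ) * ((c:ℂ) + t * Complex.I) ^ 2))) := by
  set m : ℝ := min (c^2) 1 with hm
  have hm0 : 0 < m := lt_min (by positivity) one_pos
  refine Integrable.mono'
    (g := fun t : ℝ => (Real.exp (c*x) * (Real.exp (lam*c) + 1) / (lam * m)) * (1 + t^2)⁻¹)
    (integrable_inv_one_add_sq.const_mul _) ?_ ?_
  · apply Continuous.aestronglyMeasurable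
    apply Continuous.mul (by fun_prop)
    apply Continuous.div (by fun_prop) (by fun_prop)
    intro t
    exact mul_ne_zero (by exact_mod_cast hlam.ne') (pow_ne_zero 2 (sne hc t))
  · filter_upwards with t
    have hre : ‖Complex.exp (((c:ℂ) + t * Complex.I) * x)‖ = Real.exp (c * x) := by
      rw [Complex.norm_exp]
      congr 1
      simp [Complex.mul_re]
    have hnorm : ‖(lam : ℂ) * ((c:ℂ) + t * Complex.I) ^ 2‖ = lam * (c^2 + t^2) := by
      rw [norm_mul, norm_pow, Complex.sq_norm, Complex.normSq_add_mul_I]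
      simp [Complex.norm_real, abs_of_pos hlam]
    have h1 : ‖Complex.exp ((lam:ℂ) * ((c:ℂ) + t * Complex.I)) - 1‖
        ≤ Real.exp (lam * c) + 1 := by
      refine (norm_sub_le _ _).trans ?_
      rw [Complex.norm_exp, norm_one,
        show ((lam:ℂ) * ((c:ℂ) + t * Complex.I)).re = lam * c by simp [Complex.mul_re]]
    have h2 : m * (1 + t^2) ≤ c^2 + t^2 := by
      nlinarith [min_le_left (c^2) 1, min_le_right (c^2) 1, sq_nonneg t]
    rw [norm_mul, norm_div, hnorm, hre]
    calc Real.exp (c*x) * (‖Complex.exp ((lam:ℂ) * ((c:ℂ) + t * Complex.I)) - 1‖ / (lam * (c^2 + t^2)))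
        ≤ Real.exp (c*x) * ((Real.exp (lam*c) + 1) / (lam * (m * (1 + t^2)))) := by
          gcongr
      _ = Real.exp (c*x) * (Real.exp (lam*c) + 1) / (lam * m) * (1 + t^2)⁻¹ := by
          rw [show lam * (m*(1+t^2)) = (lam*m)*(1+t^2) by ring, ← div_div]
          ring

open Complex in
theorem stmt_13 (lam c : ℝ) (hlam : 0 < lam) (hc : 0 < c) (y : ℝ) (hy : 0 < y) :
    0 ≤ ((2 * Real.pi)⁻¹ • ∫ t : ℝ, (y : ℂ) ^ ((c : ℂ) + t * Complex.I)
          * (Complex.exp ((lam : ℂ) * ((c : ℂ) + t * Complex.I)) - 1)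
          / ((lam : ℂ) * ((c : ℂ) + t * Complex.I)) / ((c : ℂ) + t * Complex.I) : ℂ).re
        - (if 1 ≤ y then (1 : ℝ) else 0) ∧
    ((2 * Real.pi)⁻¹ • ∫ t : ℝ, (y : ℂ) ^ ((c : ℂ) + t * Complex.I)
          * (Complex.exp ((lam : ℂ) * ((c : ℂ) + t * Complex.I)) - 1)
          / ((lam : ℂ) * ((c : ℂ) + t * Complex.I)) / ((c : ℂ) + t * Complex.I) : ℂ).re
        - (if 1 ≤ y then (1 : ℝ) else 0)
      ≤ ((2 * Real.pi)⁻¹ • ∫ t : ℝ, (y : ℂ) ^ ((c : ℂ) + t * Complex.I)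
          * (Complex.exp ((lam : ℂ) * ((c : ℂ) + t * Complex.I)) - 1)
          / ((lam : ℂ) * ((c : ℂ) + t * Complex.I))
          * (1 - Complex.exp (-((lam : ℂ) * ((c : ℂ) + t * Complex.I))))
          / ((c : ℂ) + t * Complex.I) : ℂ).re := by
  set x := Real.log y with hx
  have hl0 : (lam : ℂ) ≠ 0 := by exact_mod_cast hlam.ne'
  have hπ : ((2 * Real.pi : ℝ) : ℂ) ≠ 0 := by
    push_cast
    simp [Real.pi_ne_zero]
  have hcpow : ∀ t : ℝ, (y : ℂ) ^ ((c : ℂ) + t * Complex.I)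
      = Complex.exp (((c : ℂ) + t * Complex.I) * (x : ℂ)) := by
    intro t
    rw [Complex.cpow_def_of_ne_zero (Complex.ofReal_ne_zero.2 hy.ne'),
      ← Complex.ofReal_log hy.le, mul_comm]
  have e1 : (fun t : ℝ => (y : ℂ) ^ ((c : ℂ) + t * Complex.I)
          * (Complex.exp ((lam : ℂ) * ((c : ℂ) + t * Complex.I)) - 1)
          / ((lam : ℂ) * ((c : ℂ) + t * Complex.I)) / ((c : ℂ) + t * Complex.I))
      = fun t : ℝ => Complex.exp (((c:ℂ) + t * Complex.I) * x)
          * ((Complex.exp ((lam:ℂ) * ((c:ℂ) + t * Complex.I)) - 1)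
            / ((lam:ℂ) * ((c:ℂ) + t * Complex.I) ^ 2)) := by
    funext t
    rw [hcpow t, div_div,
      show (lam:ℂ) * ((c:ℂ) + t * Complex.I) * ((c:ℂ) + t * Complex.I)
        = (lam:ℂ) * ((c:ℂ) + t * Complex.I) ^ 2 by ring,
      mul_div_assoc]
  have e2 : (fun t : ℝ => (y : ℂ) ^ ((c : ℂ) + t * Complex.I)
          * (Complex.exp ((lam : ℂ) * ((c : ℂ) + t * Complex.I)) - 1)
          / ((lam : ℂ) * ((c : ℂ) + t * Complex.I))
          * (1 - Complex.exp (-((lam : ℂ) * ((c : ℂ) + t * Complex.I))))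
          / ((c : ℂ) + t * Complex.I))
      = fun t : ℝ => Complex.exp (((c:ℂ) + t * Complex.I) * x)
          * ((Complex.exp ((lam:ℂ) * ((c:ℂ) + t * Complex.I)) - 1)
            / ((lam:ℂ) * ((c:ℂ) + t * Complex.I) ^ 2))
        - Complex.exp (((c:ℂ) + t * Complex.I) * ((x - lam : ℝ) : ℂ))
          * ((Complex.exp ((lam:ℂ) * ((c:ℂ) + t * Complex.I)) - 1)
            / ((lam:ℂ) * ((c:ℂ) + t * Complex.I) ^ 2)) := by
    funext t
    rw [hcpow t,
      show Complex.exp (((c:ℂ) + t * Complex.I) * ((x - lam : ℝ) : ℂ))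
          = Complex.exp (((c:ℂ) + t * Complex.I) * (x:ℂ))
            * Complex.exp (-((lam:ℂ) * ((c:ℂ) + t * Complex.I))) by
        rw [← Complex.exp_add]; push_cast; ring]
    rw [div_mul_eq_mul_div, div_div,
      show (lam:ℂ) * ((c:ℂ) + t * Complex.I) * ((c:ℂ) + t * Complex.I)
        = (lam:ℂ) * ((c:ℂ) + t * Complex.I) ^ 2 by ring,
      ← sub_mul, ← mul_div_assoc]
    congr 1
    ring
  have v1 : ((2 * Real.pi)⁻¹ • ∫ t : ℝ, (y : ℂ) ^ ((c : ℂ) + t * Complex.I)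
          * (Complex.exp ((lam : ℂ) * ((c : ℂ) + t * Complex.I)) - 1)
          / ((lam : ℂ) * ((c : ℂ) + t * Complex.I)) / ((c : ℂ) + t * Complex.I) : ℂ)
      = ((gfun lam x : ℝ) : ℂ) := by
    rw [e1, master hlam hc x, Complex.real_smul]
    rw [show ((((2 * Real.pi)⁻¹ : ℝ)) : ℂ) = (((2 * Real.pi : ℝ)) : ℂ)⁻¹ by push_cast; ring]
    rw [show ((2 : ℂ) * (Real.pi : ℂ)) * ((gfun lam x : ℝ) : ℂ)
        = (((2 * Real.pi : ℝ)) : ℂ) * ((gfun lam x : ℝ) : ℂ) by push_cast; ring]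
    rw [← mul_assoc, inv_mul_cancel₀ hπ, one_mul]
  have v2 : ((2 * Real.pi)⁻¹ • ∫ t : ℝ, (y : ℂ) ^ ((c : ℂ) + t * Complex.I)
          * (Complex.exp ((lam : ℂ) * ((c : ℂ) + t * Complex.I)) - 1)
          / ((lam : ℂ) * ((c : ℂ) + t * Complex.I))
          * (1 - Complex.exp (-((lam : ℂ) * ((c : ℂ) + t * Complex.I))))
          / ((c : ℂ) + t * Complex.I) : ℂ)
      = ((gfun lam x - gfun lam (x - lam) : ℝ) : ℂ) := by
    rw [e2, integral_sub (integrable_Fc hlam hc x) (integrable_Fc hlam hc (x - lam)),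
      master hlam hc x, master hlam hc (x - lam), Complex.real_smul]
    rw [show ((((2 * Real.pi)⁻¹ : ℝ)) : ℂ) = (((2 * Real.pi : ℝ)) : ℂ)⁻¹ by push_cast; ring]
    rw [show (2 * (Real.pi:ℂ)) * ((gfun lam x : ℝ) : ℂ) - (2 * (Real.pi:ℂ)) * ((gfun lam (x - lam) : ℝ) : ℂ)
        = (((2 * Real.pi : ℝ)) : ℂ) * ((gfun lam x - gfun lam (x - lam) : ℝ) : ℂ) by push_cast; ring]
    rw [← mul_assoc, inv_mul_cancel₀ hπ, one_mul]
  rw [v1, v2, Complex.ofReal_re, Complex.ofReal_re]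
  by_cases hy1 : 1 ≤ y
  · rw [if_pos hy1, gfun_of_nonneg hlam (Real.log_nonneg hy1)]
    constructor
    · norm_num
    · have := gfun_le_one lam (x - lam)
      linarith
  · rw [if_neg hy1,
      gfun_of_le hlam (show x - lam ≤ -lam by
        have : x < 0 := Real.log_neg hy (lt_of_not_ge hy1)
        linarith)]
    constructor
    · simpa using gfun_nonneg lam x
    · linarith
end

section
/- Let X = (X(p))_p be independent random variables, each uniformly distributed on the unit circle, indexed by primes. For 1/2 < σ ≤ 1 and κ > 0, define E_p(κ) = E(|1 − X(p)p^{−σ}|^{−κ}) = (1/2π)∫_0^{2π}(1 − 2cos θ·p^{−σ} + p^{−2σ})^{−κ/2} dθ. Then for any fixed prime p and as κ → ∞, log E_p(κ) = −κ·log(1 − p^{−σ}) + O(log κ). -/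
open Real intervalIntegral

lemma aux_ep (r : ℝ) (hr0 : 0 < r) (hr1 : r < 1) :
    ∃ C κ₀ : ℝ, 0 < C ∧ ∀ κ : ℝ, κ₀ ≤ κ →
      |Real.log ((2 * Real.pi)⁻¹ * ∫ θ in (0 : ℝ)..(2 * Real.pi),
            (1 - 2 * Real.cos θ * r + r * r) ^ (-κ / 2))
          + κ * Real.log (1 - r)|
        ≤ C * Real.log κ := by
  have h1r : 0 < 1 - r := by linarith
  obtain ⟨A, hA⟩ : ∃ x : ℝ, x = r / (1 - r) ^ 2 := ⟨_, rfl⟩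
  have hA0 : 0 < A := by rw [hA]; positivity
  have hπ : (0:ℝ) < 2 * π := by positivity
  have hlog2π : 0 < Real.log (2 * π) := Real.log_pos (by nlinarith [Real.pi_gt_three])
  refine ⟨Real.log (2 * π) + A / 2 + 1, Real.exp 1, by linarith, ?_⟩
  intro κ hκ
  have hκ1 : (1:ℝ) ≤ κ := le_trans (by nlinarith [Real.exp_one_gt_d9]) hκ
  have hκ0 : (0:ℝ) < κ := by linarith
  have hlogκ : (1:ℝ) ≤ Real.log κ := by
    calc (1:ℝ) = Real.log (Real.exp 1) := (Real.log_exp 1).symm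
    _ ≤ Real.log κ := Real.log_le_log (Real.exp_pos 1) hκ
  have hexp : -κ / 2 ≤ 0 := by linarith
  obtain ⟨G, hG⟩ : ∃ G : ℝ → ℝ,
      G = fun θ => (1 - 2 * Real.cos θ * r + r * r) ^ (-κ / 2) := ⟨_, rfl⟩
  have key : (∫ θ in (0:ℝ)..(2 * π),
      (1 - 2 * Real.cos θ * r + r * r) ^ (-κ / 2)) = ∫ θ in (0:ℝ)..(2 * π), G θ := by
    simp only [hG]
  rw [key]
  clear key
  have hGθ : ∀ θ, G θ = (1 - 2 * Real.cos θ * r + r * r) ^ (-κ / 2) :=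
    fun θ => by rw [hG]
  have hfpos : ∀ θ : ℝ, (1 - r) ^ 2 ≤ 1 - 2 * Real.cos θ * r + r * r := by
    intro θ
    have := Real.cos_le_one θ
    nlinarith
  have hfpos' : ∀ θ : ℝ, (0:ℝ) < 1 - 2 * Real.cos θ * r + r * r :=
    fun θ => lt_of_lt_of_le (by positivity) (hfpos θ)
  have hGc : Continuous G := by
    rw [hG]
    apply Continuous.rpow_const
    · continuity
    · intro x; exact Or.inl (ne_of_gt (hfpos' x))
  have hGint : ∀ a b : ℝ, IntervalIntegrable G MeasureTheory.volume a b :=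
    fun a b => hGc.intervalIntegrable a b
  have hGnn : ∀ θ, 0 ≤ G θ := fun θ => by rw [hGθ θ]; exact Real.rpow_nonneg (hfpos' θ).le _
  have hsq : ((1 - r) * (1 - r)) ^ (-κ / 2) = (1 - r) ^ (-κ) := by
    rw [Real.mul_rpow h1r.le h1r.le, ← Real.rpow_add h1r]
    congr 1; ring
  -- upper bound on G
  have hup : ∀ θ, G θ ≤ (1 - r) ^ (-κ) := by
    intro θ
    rw [hGθ θ, ← hsq]
    apply Real.rpow_le_rpow_of_nonpos (mul_pos h1r h1r) _ hexp
    calc (1 - r) * (1 - r) = (1 - r) ^ 2 := by ring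
    _ ≤ _ := hfpos θ
  -- δ
  obtain ⟨δ, hδ⟩ : ∃ x : ℝ, x = κ ^ (-(1:ℝ)/2) := ⟨_, rfl⟩
  have hδ0 : 0 < δ := by rw [hδ]; exact Real.rpow_pos_of_pos hκ0 _
  have hδsq : δ * δ = κ⁻¹ := by
    have h12 : (-(1:ℝ)/2) + (-(1:ℝ)/2) = -1 := by norm_num
    rw [hδ, ← Real.rpow_add hκ0, h12, Real.rpow_neg_one]
  -- lower pointwise bound on [0, δ]
  obtain ⟨m, hm⟩ : ∃ x : ℝ, x = Real.exp (-(A/2)) * (1 - r) ^ (-κ) := ⟨_, rfl⟩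
  have hm0 : 0 < m := by rw [hm]; exact mul_pos (Real.exp_pos _) (Real.rpow_pos_of_pos h1r _)
  have hlow : ∀ θ ∈ Set.Icc (0:ℝ) δ, m ≤ G θ := by
    intro θ hθ
    have hθ0 := hθ.1
    have hθδ := hθ.2
    have hcos : 1 - θ ^ 2 / 2 ≤ Real.cos θ := Real.one_sub_sq_div_two_le_cos
    have hθsq : θ * θ ≤ δ * δ := mul_le_mul hθδ hθδ hθ0 hδ0.le
    have hB0 : (0:ℝ) < 1 + A / κ := by positivity
    have hfle : 1 - 2 * Real.cos θ * r + r * r ≤ (1 - r) * (1 - r) * (1 + A / κ) := by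
      have h1 : (1 - r) * (1 - r) * (1 + A / κ) = (1 - r) ^ 2 + r / κ := by
        rw [hA]; field_simp
      have h2 : 1 - 2 * Real.cos θ * r + r * r ≤ (1 - r) ^ 2 + r * (θ * θ) := by
        nlinarith
      have h3 : r * (θ * θ) ≤ r / κ := by
        rw [div_eq_mul_inv, ← hδsq]
        exact mul_le_mul_of_nonneg_left hθsq hr0.le
      rw [h1]
      exact le_trans h2 (add_le_add_right h3 _)
    rw [hGθ θ, hm]
    calc Real.exp (-(A/2)) * (1 - r) ^ (-κ)
        = (1 - r) ^ (-κ) * Real.exp (-(A/2)) := by ring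
    _ ≤ (1 - r) ^ (-κ) * (1 + A / κ) ^ (-κ / 2) := by
        apply mul_le_mul_of_nonneg_left _ (Real.rpow_nonneg h1r.le _)
        rw [Real.rpow_def_of_pos hB0]
        apply Real.exp_le_exp.mpr
        have hlog : Real.log (1 + A / κ) ≤ A / κ := by
          have := Real.log_le_sub_one_of_pos hB0
          linarith
        have h5 : (κ / 2) * Real.log (1 + A / κ) ≤ (κ / 2) * (A / κ) :=
          mul_le_mul_of_nonneg_left hlog (by linarith)
        have heq : (κ / 2) * (A / κ) = A / 2 := by field_simp
        nlinarith
    _ = ((1 - r) * (1 - r)) ^ (-κ / 2) * (1 + A / κ) ^ (-κ / 2) := by rw [hsq]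
    _ = ((1 - r) * (1 - r) * (1 + A / κ)) ^ (-κ / 2) := by
        rw [← Real.mul_rpow (mul_pos h1r h1r).le hB0.le]
    _ ≤ (1 - 2 * Real.cos θ * r + r * r) ^ (-κ / 2) :=
        Real.rpow_le_rpow_of_nonpos (hfpos' θ) hfle hexp
  -- integral bounds
  obtain ⟨I, hI⟩ : ∃ x : ℝ, x = ∫ θ in (0:ℝ)..(2 * π), G θ := ⟨_, rfl⟩
  rw [← hI]
  have hIub : I ≤ 2 * π * ((1 - r) ^ (-κ)) := by
    rw [hI]
    calc (∫ θ in (0:ℝ)..(2 * π), G θ) ≤ ∫ _ in (0:ℝ)..(2 * π), (1 - r) ^ (-κ) := by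
          apply intervalIntegral.integral_mono_on hπ.le (hGint 0 (2 * π))
            intervalIntegrable_const
          intro x _; exact hup x
    _ = 2 * π * ((1 - r) ^ (-κ)) := by
          rw [intervalIntegral.integral_const, sub_zero, smul_eq_mul]
  have hIlb : δ * m ≤ I := by
    have h1 : δ * m = ∫ _ in (0:ℝ)..δ, m := by
      rw [intervalIntegral.integral_const, sub_zero, smul_eq_mul]
    have h2 : (∫ _ in (0:ℝ)..δ, m) ≤ ∫ θ in (0:ℝ)..δ, G θ := by
      apply intervalIntegral.integral_mono_on hδ0.le intervalIntegrable_const (hGint 0 δ)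
      exact hlow
    have hδ2π : δ ≤ 2 * π := by
      have : δ ≤ 1 := by
        rw [hδ]; exact Real.rpow_le_one_of_one_le_of_nonpos hκ1 (by norm_num)
      linarith only [this, Real.pi_gt_three]
    have h3 : (∫ θ in (0:ℝ)..δ, G θ) ≤ I := by
      rw [hI]
      apply intervalIntegral.integral_mono_interval le_rfl hδ0.le hδ2π
        (MeasureTheory.ae_of_all _ hGnn) (hGint 0 (2 * π))
    linarith only [h1, h2, h3]
  have hI0 : 0 < I := lt_of_lt_of_le (mul_pos hδ0 hm0) hIlb
  have hE0 : 0 < (2 * π)⁻¹ * I := mul_pos (inv_pos.mpr hπ) hI0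
  have hlogE : Real.log ((2 * π)⁻¹ * I) = Real.log I - Real.log (2 * π) := by
    rw [Real.log_mul (by positivity) (ne_of_gt hI0), Real.log_inv]; ring
  have hlog1r : Real.log ((1 - r) ^ (-κ)) = -κ * Real.log (1 - r) :=
    Real.log_rpow h1r _
  have hEub : Real.log ((2 * π)⁻¹ * I) + κ * Real.log (1 - r) ≤ 0 := by
    have h1 : Real.log I ≤ Real.log (2 * π * ((1 - r) ^ (-κ))) :=
      Real.log_le_log hI0 hIub
    rw [Real.log_mul (ne_of_gt hπ) (ne_of_gt (Real.rpow_pos_of_pos h1r _)), hlog1r] at h1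
    rw [hlogE]; linarith only [h1]
  have hElb : -(Real.log (2 * π) + A/2 + (1/2) * Real.log κ)
      ≤ Real.log ((2 * π)⁻¹ * I) + κ * Real.log (1 - r) := by
    have h1 : Real.log (δ * m) ≤ Real.log I := Real.log_le_log (mul_pos hδ0 hm0) hIlb
    have h2 : Real.log (δ * m)
        = -(1/2) * Real.log κ + (-(A/2)) + (-κ * Real.log (1 - r)) := by
      rw [Real.log_mul (ne_of_gt hδ0) (ne_of_gt hm0), hm,
        Real.log_mul (Real.exp_ne_zero _) (ne_of_gt (Real.rpow_pos_of_pos h1r _)),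
        hδ, Real.log_rpow hκ0, Real.log_exp, hlog1r]
      ring
    rw [hlogE]; rw [h2] at h1; linarith only [h1]
  have hkey : Real.log (2 * π) + A/2 + (1/2) * Real.log κ
      ≤ (Real.log (2 * π) + A/2 + 1) * Real.log κ := by
    have h6 : (Real.log (2 * π) + A/2) * 1 ≤ (Real.log (2 * π) + A/2) * Real.log κ :=
      mul_le_mul_of_nonneg_left hlogκ (by linarith only [hlog2π, hA0])
    nlinarith only [h6, hlogκ]
  rw [abs_le]
  constructor
  · linarith only [hkey, hElb]
  · linarith only [hkey, hEub, hlog2π, hA0, hlogκ]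

theorem stmt_14 (σ : ℝ) (hσ : 1 / 2 < σ) (hσ' : σ ≤ 1) (p : ℕ) (hp : p.Prime) :
    ∃ C κ₀ : ℝ, 0 < C ∧ ∀ κ : ℝ, κ₀ ≤ κ →
      |Real.log ((2 * Real.pi)⁻¹ * ∫ θ in (0 : ℝ)..(2 * Real.pi),
            (1 - 2 * Real.cos θ * (p : ℝ) ^ (-σ) + (p : ℝ) ^ (-(2 * σ))) ^ (-κ / 2))
          + κ * Real.log (1 - (p : ℝ) ^ (-σ))|
        ≤ C * Real.log κ := by
  have hp2 : (2:ℝ) ≤ p := by exact_mod_cast hp.two_le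
  have hp1 : (1:ℝ) < p := by linarith
  have hr0 : 0 < (p:ℝ) ^ (-σ) := Real.rpow_pos_of_pos (by linarith) _
  have hr1 : (p:ℝ) ^ (-σ) < 1 := Real.rpow_lt_one_of_one_lt_of_neg hp1 (by linarith)
  have hrr : (p:ℝ) ^ (-(2 * σ)) = (p:ℝ) ^ (-σ) * (p:ℝ) ^ (-σ) := by
    rw [← Real.rpow_add (by linarith : (0:ℝ) < p)]
    ring_nf
  obtain ⟨C, κ₀, hC, h⟩ := aux_ep ((p:ℝ) ^ (-σ)) hr0 hr1
  refine ⟨C, κ₀, hC, fun κ hκ => ?_⟩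
  simpa only [hrr] using h κ hκ
end

section
/- For u ∈ (0,1), define G(u) = 2u/π + 2u(1−u)cot(πu), extended by G(0)=2/π·0+2/π = 2/π (limit as u→0⁺ equals 2/π) and G(1) = 2/π. Then 0 ≤ G(u) ≤ 2/π for all u ∈ [0,1]. -/
/-- Selberg's function `G(u) = 2u/π + 2u(1-u)cot(πu)`, with its limit values at `0` and `1`. -/
noncomputable def G (u : ℝ) : ℝ :=
  if u = 0 ∨ u = 1 then 2 / Real.pi
  else 2 * u / Real.pi + 2 * u * (1 - u) * (Real.cos (Real.pi * u) / Real.sin (Real.pi * u))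

lemma key_xcos {x : ℝ} (hx : 0 < x) (hx' : x < Real.pi) :
    x * Real.cos x ≤ Real.sin x := by
  have hs : 0 < Real.sin x := Real.sin_pos_of_pos_of_lt_pi hx hx'
  rcases lt_trichotomy x (Real.pi / 2) with h | h | h
  · have hc : 0 < Real.cos x := Real.cos_pos_of_mem_Ioo ⟨by linarith [Real.pi_pos], h⟩
    have ht := Real.lt_tan hx h
    rw [Real.tan_eq_sin_div_cos, lt_div_iff₀ hc] at ht
    linarith
  · simp [h]
  · have hc : Real.cos x ≤ 0 :=
      Real.cos_nonpos_of_pi_div_two_le_of_le h.le (by linarith [Real.pi_pos])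
    nlinarith

theorem stmt_19 : ∀ u ∈ Set.Icc (0 : ℝ) 1, 0 ≤ G u ∧ G u ≤ 2 / Real.pi := by
  have hπ := Real.pi_pos
  intro u ⟨h0, h1⟩
  by_cases hu : u = 0 ∨ u = 1
  · rw [G, if_pos hu]
    exact ⟨by positivity, le_refl _⟩
  · rw [G, if_neg hu]
    push_neg at hu
    have hu0 : 0 < u := lt_of_le_of_ne h0 (Ne.symm hu.1)
    have hu1 : u < 1 := lt_of_le_of_ne h1 hu.2
    have hx0 : 0 < Real.pi * u := by positivity
    have hx1 : Real.pi * u < Real.pi := by nlinarith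
    have hs : 0 < Real.sin (Real.pi * u) := Real.sin_pos_of_pos_of_lt_pi hx0 hx1
    have k1 := key_xcos hx0 hx1
    have k2 := key_xcos (x := Real.pi - Real.pi * u) (by linarith) (by linarith)
    rw [Real.cos_pi_sub, Real.sin_pi_sub] at k2
    set c := Real.cos (Real.pi * u) with hc
    set s := Real.sin (Real.pi * u) with hsdef
    have e : 2 * u / Real.pi + 2 * u * (1 - u) * (c / s)
        = (2 * u * s + 2 * u * (1 - u) * Real.pi * c) / (Real.pi * s) := by
      field_simp
    rw [e]
    constructor
    · apply div_nonneg _ (by positivity)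
      nlinarith
    · rw [div_le_div_iff₀ (by positivity) hπ]
      nlinarith [mul_nonneg (by linarith : (0:ℝ) ≤ 1 - u) (by linarith : 0 ≤ s - Real.pi * u * c)]
end
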